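/- Consider n qubits, numbers λ_i ∈ [0,1) with W_i = (1/2)(1 + λ_i Z), reset dissipators D_i(ρ) = Tr_i(ρ) ⊗ W_i, nonnegative weights q_i with ∑_i q_i = 1, and E_0(ρ) = ∑_i q_i D_i(ρ). For a string α ∈ {0,1,2,3}^n set q_α := ∑_{i ∈ supp(α)} q_i. Then the Wauli basis diagonalizes E_0 and the dual Wauli basis diagonalizes its Hilbert–Schmidt adjoint: E_0(Q_α) = (1 − q_α)·Q_α and E_0*(Q̃_α) = (1 − q_α)·Q̃_α for every string α. -/

import Mathlib

namespace SSP

noncomputable section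

open Matrix
open scoped ComplexOrder

/-- Computational basis labels for `n` qubits. -/
abbrev Idx (n : ℕ) := Fin n → Fin 2

/-- Operators (matrices) on the Hilbert space of `n` qubits. -/
abbrev Op (n : ℕ) := Matrix (Idx n) (Idx n) ℂ

/-- Super-operators on `n` qubits. -/
abbrev SOp (n : ℕ) := Op n →ₗ[ℂ] Op n

/-- The operator norm (largest singular value) of a complex matrix. -/
noncomputable def opNorm {m : Type*} [Fintype m] [DecidableEq m]
    (M : Matrix m m ℂ) : ℝ :=
  ‖Matrix.toEuclideanCLM (𝕜 := ℂ) M‖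

/-- A density matrix: positive semidefinite with unit trace. -/
def IsDensity {n : ℕ} (ρ : Op n) : Prop := ρ.PosSemidef ∧ ρ.trace = 1

/-- An operator is supported on the set `S` of qubits if it has the form
`Ô_S ⊗ 1` on the remaining qubits. -/
def SupportedOn {n : ℕ} (S : Set (Fin n)) (M : Op n) : Prop :=
  (∀ x y : Idx n, (∃ i ∉ S, x i ≠ y i) → M x y = 0) ∧
  (∀ x y x' y' : Idx n,
      (∀ i ∈ S, x i = x' i) → (∀ i ∈ S, y i = y' i) →
      (∀ i ∉ S, x i = y i) → (∀ i ∉ S, x' i = y' i) → M x y = M x' y')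

/-- The support of an operator: the smallest set of qubits supporting it
(the intersection of all supporting sets). -/
def suppOp {n : ℕ} (M : Op n) : Set (Fin n) :=
  {i | ∀ S : Set (Fin n), SupportedOn S M → i ∈ S}

/-- `E` is a quantum channel (CPTP map) acting only on the qubits in `S`:
it has a Kraus representation whose Kraus operators are all supported on `S`. -/
def IsChannelOn {n : ℕ} (S : Set (Fin n)) (E : SOp n) : Prop :=
  ∃ (m : ℕ) (F : Fin m → Op n),
    (∀ j, SupportedOn S (F j)) ∧
    (∑ j, (F j)ᴴ * F j = 1) ∧
    (∀ ρ, E ρ = ∑ j, F j * ρ * (F j)ᴴ)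

/-- A quantum channel on the whole system. -/
def IsChannel {n : ℕ} (E : SOp n) : Prop := IsChannelOn Set.univ E

/-- `Estar` is the adjoint of `E` with respect to the Hilbert–Schmidt
inner product `⟨A,B⟩ = Tr(A†B)`. -/
def IsHSAdjoint {n : ℕ} (E Estar : SOp n) : Prop :=
  ∀ A B : Op n, ((Estar A)ᴴ * B).trace = (Aᴴ * (E B)).trace

/-- An ergodic channel: it has a unique fixed point among density matrices,
this fixed point is full rank (positive definite), and there is no other
eigenvalue of modulus one. -/
def IsErgodic {n : ℕ} (E : SOp n) : Prop :=
  (∃ σ : Op n, IsDensity σ ∧ σ.PosDef ∧ E σ = σ ∧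
      ∀ ρ : Op n, IsDensity ρ → E ρ = ρ → ρ = σ) ∧
  (∀ μ : ℂ, Module.End.HasEigenvalue (E : Module.End ℂ (Op n)) μ → μ = 1 ∨ ‖μ‖ < 1)

/-- The set of qubits (endpoints) of an edge. -/
def edgeQubits {n : ℕ} (e : Sym2 (Fin n)) : Set (Fin n) := {i | i ∈ e}

/-- Finset of endpoints of an edge. -/
def edgeFinset' {n : ℕ} (e : Sym2 (Fin n)) : Finset (Fin n) :=
  Finset.univ.filter (· ∈ e)

/-- A Hamiltonian is geometrically `k`-local w.r.t. the graph `G`: it is a sum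
of Hermitian terms, each supported on a connected subset of `G` with at most
`k` vertices. -/
def GeomLocal {n : ℕ} (G : SimpleGraph (Fin n)) (k : ℕ) (H : Op n) : Prop :=
  ∃ (m : ℕ) (h : Fin m → Op n) (S : Fin m → Set (Fin n)),
    H = ∑ j, h j ∧
    ∀ j, (h j).IsHermitian ∧ SupportedOn (S j) (h j) ∧
      (S j).ncard ≤ k ∧ (G.induce (S j)).Preconnected

/-- The ball of radius `k` around a set of vertices, in the graph metric. -/
def Ball {n : ℕ} (G : SimpleGraph (Fin n)) (X : Set (Fin n)) (k : ℕ) :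
    Set (Fin n) :=
  {v | ∃ u ∈ X, ∃ w : G.Walk u v, w.length ≤ k}

/- Pauli matrices and the Wauli bases. -/
def PX : Matrix (Fin 2) (Fin 2) ℂ := !![0, 1; 1, 0]
def PY : Matrix (Fin 2) (Fin 2) ℂ := !![0, -Complex.I; Complex.I, 0]
def PZ : Matrix (Fin 2) (Fin 2) ℂ := !![1, 0; 0, -1]

/-- `W = (1/2)(1 + λ Z)`. -/
noncomputable def Wmat (l : ℝ) : Matrix (Fin 2) (Fin 2) ℂ :=
  (2⁻¹ : ℂ) • (1 + (l : ℂ) • PZ)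

/-- Single-qubit Wauli basis `{W, X/2, Y/2, Z/2}`. -/
noncomputable def wauli (l : ℝ) : Fin 4 → Matrix (Fin 2) (Fin 2) ℂ :=
  ![Wmat l, (2⁻¹ : ℂ) • PX, (2⁻¹ : ℂ) • PY, (2⁻¹ : ℂ) • PZ]

/-- Single-qubit dual Wauli basis `{1, X, Y, Z - λ·1}`. -/
noncomputable def dualWauli (l : ℝ) : Fin 4 → Matrix (Fin 2) (Fin 2) ℂ :=
  ![1, PX, PY, PZ - (l : ℂ) • 1]

/-- The `n`-qubit Wauli basis element `Q_α` (tensor product of the `Q_{α_i}`). -/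
noncomputable def Qmat {n : ℕ} (lam : Fin n → ℝ) (α : Fin n → Fin 4) : Op n :=
  Matrix.of fun x y => ∏ i, wauli (lam i) (α i) (x i) (y i)

/-- The `n`-qubit dual Wauli basis element `Q̃_α`. -/
noncomputable def Qdual {n : ℕ} (lam : Fin n → ℝ) (α : Fin n → Fin 4) : Op n :=
  Matrix.of fun x y => ∏ i, dualWauli (lam i) (α i) (x i) (y i)

/-- The support of a Wauli string. -/
def suppStr {n : ℕ} (α : Fin n → Fin 4) : Finset (Fin n) :=
  Finset.univ.filter (fun i => α i ≠ 0)

/-- The coefficient `c_α = Tr(Q_α O)` of the expansion `O = ∑_α c_α Q̃_α`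
in the dual Wauli basis. -/
noncomputable def QCoeff {n : ℕ} (lam : Fin n → ℝ) (O : Op n)
    (α : Fin n → Fin 4) : ℂ :=
  (Qmat lam α * O).trace

/-- The `Q1` norm: the `ℓ¹` norm of the dual-Wauli coefficient vector. -/
noncomputable def Q1Norm {n : ℕ} (lam : Fin n → ℝ) (O : Op n) : ℝ :=
  ∑ α : Fin n → Fin 4, ‖QCoeff lam O α‖

/-- The subspace `S_k`: the span of the dual Wauli operators `Q̃_α` with
`|α| ≤ k`. -/
def Sk {n : ℕ} (lam : Fin n → ℝ) (k : ℕ) : Submodule ℂ (Op n) :=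
  Submodule.span ℂ {Q | ∃ α : Fin n → Fin 4, (suppStr α).card ≤ k ∧ Q = Qdual lam α}

/-- The trace norm `Tr √(O†O)` of a matrix. -/
noncomputable def traceNorm {m : Type*} [Fintype m] [DecidableEq m]
    (M : Matrix m m ℂ) : ℝ :=
  ((((Matrix.posSemidef_conjTranspose_mul_self M).1.eigenvectorUnitary : Matrix m m ℂ) *
      diagonal ((fun x : ℝ => ((√x : ℝ) : ℂ)) ∘ (Matrix.posSemidef_conjTranspose_mul_self M).1.eigenvalues) *
      star ((Matrix.posSemidef_conjTranspose_mul_self M).1.eigenvectorUnitary : Matrix m m ℂ)).trace).re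



/- ===== auxiliary lemmas for STATEMENT 13 ===== -/

private lemma sum4aux {β γ : Type*} [Fintype β] [Fintype γ] (A : β → β → ℂ) (G : γ → γ → ℂ) :
    (∑ d : β, ∑ x' : γ, ∑ c : β, ∑ y' : γ, A c d * G x' y')
    = (∑ c, ∑ d, A c d) * (∑ x', ∑ y', G x' y') := by
  calc (∑ d : β, ∑ x' : γ, ∑ c : β, ∑ y' : γ, A c d * G x' y')
      = ∑ d : β, ∑ c : β, ∑ x' : γ, ∑ y' : γ, A c d * G x' y' := by
        exact Finset.sum_congr rfl fun d _ => Finset.sum_comm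
    _ = ∑ d : β, ∑ c : β, A c d * (∑ x' : γ, ∑ y' : γ, G x' y') := by
        simp only [← Finset.mul_sum]
    _ = (∑ d : β, ∑ c : β, A c d) * (∑ x' : γ, ∑ y' : γ, G x' y') := by
        simp only [← Finset.sum_mul]
    _ = (∑ c, ∑ d, A c d) * (∑ x', ∑ y', G x' y') := by rw [Finset.sum_comm]

private lemma sum3aux {β γ : Type*} [Fintype β] [Fintype γ] (H : β → γ → γ → ℂ) :
    (∑ d : β, ∑ x' : γ, ∑ y' : γ, H d x' y')
    = ∑ x' : γ, ∑ y' : γ, ∑ d : β, H d x' y' := by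
  rw [Finset.sum_comm]
  exact Finset.sum_congr rfl fun x' _ => Finset.sum_comm

lemma wauli_trace (l : ℝ) (k : Fin 4) :
    ∑ b : Fin 2, wauli l k b b = if k = 0 then 1 else 0 := by
  fin_cases k <;>
    simp [wauli, Wmat, PX, PY, PZ, Fin.sum_univ_two, Matrix.one_apply] <;> ring

lemma dual_W_pair (l : ℝ) (k : Fin 4) :
    ∑ c : Fin 2, ∑ d : Fin 2,
      (starRingEnd ℂ) (dualWauli l k c d) * Wmat l c d = if k = 0 then 1 else 0 := by
  fin_cases k <;>
    simp [dualWauli, Wmat, PX, PY, PZ, Fin.sum_univ_two, Matrix.one_apply] <;> ring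

lemma D_on_Q {n : ℕ} (lam : Fin n → ℝ) (α : Fin n → Fin 4) (i : Fin n) :
    (Matrix.of fun x y : Idx n =>
      (∑ b : Fin 2, Qmat lam α (Function.update x i b) (Function.update y i b)) *
        Wmat (lam i) (x i) (y i))
    = if α i = 0 then Qmat lam α else 0 := by
  have key : ∀ x y : Idx n, ∀ b : Fin 2,
      Qmat lam α (Function.update x i b) (Function.update y i b)
      = wauli (lam i) (α i) b b *
        ∏ j ∈ Finset.univ.erase i, wauli (lam j) (α j) (x j) (y j) := by
    intro x y b
    show (∏ j, wauli (lam j) (α j) (Function.update x i b j) (Function.update y i b j)) = _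
    rw [← Finset.mul_prod_erase _ _ (Finset.mem_univ i)]
    rw [Function.update_self, Function.update_self]
    congr 1
    refine Finset.prod_congr rfl fun j hj => ?_
    have hji : j ≠ i := Finset.ne_of_mem_erase hj
    rw [Function.update_of_ne hji, Function.update_of_ne hji]
  by_cases h : α i = 0
  · rw [if_pos h]
    ext x y
    simp only [Matrix.of_apply, key, ← Finset.sum_mul, wauli_trace, if_pos h, one_mul]
    show _ = ∏ j, wauli (lam j) (α j) (x j) (y j)
    rw [← Finset.mul_prod_erase _ _ (Finset.mem_univ i), h]
    show _ * Wmat (lam i) (x i) (y i) = Wmat (lam i) (x i) (y i) * _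
    ring
  · rw [if_neg h]
    ext x y
    simp only [Matrix.of_apply, key, ← Finset.sum_mul, wauli_trace, if_neg h, zero_mul,
      Matrix.zero_apply]

lemma trace_dual_D {n : ℕ} (lam : Fin n → ℝ) (α : Fin n → Fin 4) (i : Fin n) (B : Op n) :
    ((Qdual lam α)ᴴ * (Matrix.of fun x y : Idx n =>
        (∑ b : Fin 2, B (Function.update x i b) (Function.update y i b)) *
          Wmat (lam i) (x i) (y i))).trace
    = if α i = 0 then ((Qdual lam α)ᴴ * B).trace else 0 := by
  classical
  set e := Equiv.funSplitAt i (Fin 2) with he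
  have hsymm : ∀ (c : Fin 2) (y' : {j : Fin n // j ≠ i} → Fin 2) (j : Fin n),
      e.symm (c, y') j = if h : j = i then c else y' ⟨j, h⟩ := by
    intro c y' j; simp [he, Equiv.funSplitAt, Equiv.piSplitAt]
  have hi : ∀ (c : Fin 2) (y' : {j : Fin n // j ≠ i} → Fin 2), e.symm (c, y') i = c := by
    intro c y'; simp [hsymm]
  have hupd : ∀ (c b : Fin 2) (y' : {j : Fin n // j ≠ i} → Fin 2),
      Function.update (e.symm (c, y')) i b = e.symm (b, y') := by
    intro c b y'; funext j
    rcases eq_or_ne j i with rfl | hj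
    · simp [hsymm]
    · rw [Function.update_of_ne hj]; simp [hsymm, hj]
  have hoff : ∀ (c c' : Fin 2) (y' : {j : Fin n // j ≠ i} → Fin 2) (j : Fin n), j ≠ i →
      e.symm (c, y') j = e.symm (c', y') j := by
    intro c c' y' j hj; simp [hsymm, hj]
  set P : ({j : Fin n // j ≠ i} → Fin 2) → ({j : Fin n // j ≠ i} → Fin 2) → ℂ :=
    fun y' x' => ∏ j ∈ Finset.univ.erase i,
      (starRingEnd ℂ) (dualWauli (lam j) (α j) (e.symm (0, y') j) (e.symm (0, x') j)) with hP
  have hQd : ∀ (c d : Fin 2) (y' x' : {j : Fin n // j ≠ i} → Fin 2),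
      (starRingEnd ℂ) (Qdual lam α (e.symm (c, y')) (e.symm (d, x')))
      = (starRingEnd ℂ) (dualWauli (lam i) (α i) c d) * P y' x' := by
    intro c d y' x'
    show (starRingEnd ℂ)
        (∏ j, dualWauli (lam j) (α j) (e.symm (c, y') j) (e.symm (d, x') j)) = _
    rw [map_prod, ← Finset.mul_prod_erase _ _ (Finset.mem_univ i), hi, hi]
    congr 1
    refine Finset.prod_congr rfl fun j hj => ?_
    have hji : j ≠ i := Finset.ne_of_mem_erase hj
    rw [hoff c 0 y' j hji, hoff d 0 x' j hji]
  have htr : ∀ M : Op n, ((Qdual lam α)ᴴ * M).trace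
      = ∑ x : Idx n, ∑ y : Idx n, (starRingEnd ℂ) (Qdual lam α y x) * M y x := by
    intro M
    simp [Matrix.trace, Matrix.mul_apply, Matrix.conjTranspose_apply, Matrix.diag]
  have hreidx : ∀ F : Idx n → Idx n → ℂ, (∑ x : Idx n, ∑ y : Idx n, F x y)
      = ∑ d : Fin 2, ∑ x' : ({j : Fin n // j ≠ i} → Fin 2),
          ∑ c : Fin 2, ∑ y' : ({j : Fin n // j ≠ i} → Fin 2),
            F (e.symm (d, x')) (e.symm (c, y')) := by
    intro F
    rw [← Equiv.sum_comp e.symm (fun x => ∑ y, F x y), Fintype.sum_prod_type]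
    refine Finset.sum_congr rfl fun d _ => Finset.sum_congr rfl fun x' _ => ?_
    rw [← Equiv.sum_comp e.symm (fun y => F (e.symm (d, x')) y), Fintype.sum_prod_type]
  set T : ℂ := ∑ x' : ({j : Fin n // j ≠ i} → Fin 2), ∑ y' : ({j : Fin n // j ≠ i} → Fin 2),
      P y' x' * ∑ b : Fin 2, B (e.symm (b, y')) (e.symm (b, x')) with hT
  have hLHS : ((Qdual lam α)ᴴ * (Matrix.of fun x y : Idx n =>
        (∑ b : Fin 2, B (Function.update x i b) (Function.update y i b)) *
          Wmat (lam i) (x i) (y i))).trace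
      = (if α i = 0 then (1:ℂ) else 0) * T := by
    rw [htr, hreidx]
    have step : ∀ (d : Fin 2) (x' : {j : Fin n // j ≠ i} → Fin 2) (c : Fin 2)
        (y' : {j : Fin n // j ≠ i} → Fin 2),
        (starRingEnd ℂ) (Qdual lam α (e.symm (c, y')) (e.symm (d, x'))) *
          ((Matrix.of fun x y : Idx n =>
            (∑ b : Fin 2, B (Function.update x i b) (Function.update y i b)) *
              Wmat (lam i) (x i) (y i)) (e.symm (c, y')) (e.symm (d, x')))
        = ((starRingEnd ℂ) (dualWauli (lam i) (α i) c d) * Wmat (lam i) c d) *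
            (P y' x' * ∑ b : Fin 2, B (e.symm (b, y')) (e.symm (b, x'))) := by
      intro d x' c y'
      rw [hQd]
      simp only [Matrix.of_apply, hupd, hi]
      ring
    rw [Finset.sum_congr rfl fun d _ => Finset.sum_congr rfl fun x' _ =>
      Finset.sum_congr rfl fun c _ => Finset.sum_congr rfl fun y' _ => step d x' c y']
    rw [sum4aux, dual_W_pair, hT]
  rw [hLHS]
  by_cases h : α i = 0
  · rw [if_pos h, if_pos h, one_mul]
    rw [htr, hreidx]
    have step2 : ∀ (d : Fin 2) (x' : {j : Fin n // j ≠ i} → Fin 2) (c : Fin 2)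
        (y' : {j : Fin n // j ≠ i} → Fin 2),
        (starRingEnd ℂ) (Qdual lam α (e.symm (c, y')) (e.symm (d, x'))) *
          B (e.symm (c, y')) (e.symm (d, x'))
        = if c = d then P y' x' * B (e.symm (c, y')) (e.symm (d, x')) else 0 := by
      intro d x' c y'
      rw [hQd, h]
      show (starRingEnd ℂ) ((1 : Matrix (Fin 2) (Fin 2) ℂ) c d) * P y' x' * _ = _
      by_cases hcd : c = d
      · simp [hcd, Matrix.one_apply]
      · simp [Matrix.one_apply, hcd]
    rw [Finset.sum_congr rfl fun d _ => Finset.sum_congr rfl fun x' _ =>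
      Finset.sum_congr rfl fun c _ => Finset.sum_congr rfl fun y' _ => step2 d x' c y']
    have collapse : ∀ (d : Fin 2) (x' : {j : Fin n // j ≠ i} → Fin 2),
        (∑ c : Fin 2, ∑ y' : ({j : Fin n // j ≠ i} → Fin 2),
          if c = d then P y' x' * B (e.symm (c, y')) (e.symm (d, x')) else 0)
        = ∑ y' : ({j : Fin n // j ≠ i} → Fin 2),
            P y' x' * B (e.symm (d, y')) (e.symm (d, x')) := by
      intro d x'
      rw [Finset.sum_comm]
      refine Finset.sum_congr rfl fun y' _ => ?_
      simp
    rw [Finset.sum_congr rfl fun d _ => Finset.sum_congr rfl fun x' _ => collapse d x']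
    rw [hT]
    rw [sum3aux]
    refine Finset.sum_congr rfl fun x' _ => Finset.sum_congr rfl fun y' _ => ?_
    rw [Finset.mul_sum]
  · rw [if_neg h, if_neg h, zero_mul]

lemma matrix_eq_of_forall_trace {m : Type*} [Fintype m] [DecidableEq m] (M N : Matrix m m ℂ)
    (h : ∀ B : Matrix m m ℂ, (Mᴴ * B).trace = (Nᴴ * B).trace) : M = N := by
  ext x y
  have hx := h (Matrix.single x y 1)
  have key : ∀ A : Matrix m m ℂ, (Aᴴ * Matrix.single x y 1).trace
      = (starRingEnd ℂ) (A x y) := by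
    intro A
    simp [Matrix.trace, Matrix.mul_apply, Matrix.single, Matrix.diag,
      Matrix.conjTranspose_apply, Finset.sum_ite_eq, ite_and]
  rw [key, key] at hx
  exact (starRingEnd ℂ).injective hx


/-- the Wauli basis diagonalizes `E₀ = ∑ᵢ qᵢ Dᵢ` and the dual
Wauli basis diagonalizes its Hilbert–Schmidt adjoint, with eigenvalues
`1 - q_α`. -/
theorem wauli_diagonalizes_E0 {n : ℕ} (lam : Fin n → ℝ)
    (hlam : ∀ i, 0 ≤ lam i ∧ lam i < 1)
    (q : Fin n → ℝ) (hq0 : ∀ i, 0 ≤ q i) (hqsum : ∑ i, q i = 1)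
    (D : Fin n → SOp n)
    (hD : ∀ i (ρ : Op n), D i ρ = Matrix.of fun x y =>
      (∑ b : Fin 2, ρ (Function.update x i b) (Function.update y i b)) *
        Wmat (lam i) (x i) (y i))
    (E0 E0star : SOp n)
    (hE0 : ∀ ρ : Op n, E0 ρ = ∑ i, q i • D i ρ)
    (hadj : IsHSAdjoint E0 E0star) :
    ∀ α : Fin n → Fin 4,
      E0 (Qmat lam α) = (1 - ∑ i ∈ suppStr α, q i : ℝ) • Qmat lam α ∧
      E0star (Qdual lam α) = (1 - ∑ i ∈ suppStr α, q i : ℝ) • Qdual lam α := by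
  intro α
  have hsum : (∑ i, if α i = 0 then q i else 0) = 1 - ∑ i ∈ suppStr α, q i := by
    have h1 := Finset.sum_filter_add_sum_filter_not Finset.univ (fun i => α i = 0) q
    rw [hqsum] at h1
    have h2 : (∑ i, if α i = 0 then q i else 0)
        = ∑ i ∈ Finset.univ.filter (fun i => α i = 0), q i :=
      (Finset.sum_filter _ _).symm
    have h3 : ∑ i ∈ suppStr α, q i
        = ∑ i ∈ Finset.univ.filter (fun i => ¬ (α i = 0)), q i := rfl
    rw [h2, h3]
    linarith
  constructor
  · rw [hE0]
    have hDQ : ∀ i, D i (Qmat lam α) = if α i = 0 then Qmat lam α else 0 := fun i => by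
      rw [hD]; exact D_on_Q lam α i
    calc ∑ i, q i • D i (Qmat lam α)
        = ∑ i, (if α i = 0 then q i else 0) • Qmat lam α := by
          refine Finset.sum_congr rfl fun i _ => ?_
          rw [hDQ i]; split <;> simp
      _ = (∑ i, if α i = 0 then q i else 0 : ℝ) • Qmat lam α := by rw [Finset.sum_smul]
      _ = (1 - ∑ i ∈ suppStr α, q i : ℝ) • Qmat lam α := by rw [hsum]
  · apply matrix_eq_of_forall_trace
    intro B
    rw [hadj]
    have hstep : ((Qdual lam α)ᴴ * E0 B).trace
        = (∑ i, if α i = 0 then q i else 0 : ℝ) • ((Qdual lam α)ᴴ * B).trace := by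
      rw [hE0 B, Matrix.mul_sum, Matrix.trace_sum]
      have hterm : ∀ i, ((Qdual lam α)ᴴ * (q i • D i B)).trace
          = (if α i = 0 then q i else 0 : ℝ) • ((Qdual lam α)ᴴ * B).trace := by
        intro i
        rw [Matrix.mul_smul, Matrix.trace_smul, hD i B, trace_dual_D]
        split <;> simp
      rw [Finset.sum_congr rfl fun i _ => hterm i, ← Finset.sum_smul]
    rw [hstep, hsum]
    rw [Matrix.conjTranspose_smul, Matrix.smul_mul, Matrix.trace_smul, star_trivial]

end

end SSP
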